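/- Strong duality for discrete EOT: EOT_C(a,b) = sup over λ ∈ Δ_N and (f,g) ∈ ℝ^n × ℝ^m satisfying f_k + g_l ≤ λ_i (C_i)_{kl} for all i,k,l, of ⟨f,a⟩ + ⟨g,b⟩. -/

import Mathlib

open Finset

/-- Frobenius inner product of two matrices. -/
def dot {n m : ℕ} (P C : Matrix (Fin n) (Fin m) ℝ) : ℝ := ∑ i, ∑ j, P i j * C i j

/-- `P` is a coupling of the probability vectors `a` and `b`. -/
def IsCoupling {n m : ℕ} (a : Fin n → ℝ) (b : Fin m → ℝ)
    (P : Matrix (Fin n) (Fin m) ℝ) : Prop :=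
  (∀ i j, 0 ≤ P i j) ∧ (∀ i, ∑ j, P i j = a i) ∧ (∀ j, ∑ i, P i j = b j)

/-- Discrete optimal transport value. -/
noncomputable def W {n m : ℕ} (a : Fin n → ℝ) (b : Fin m → ℝ)
    (C : Matrix (Fin n) (Fin m) ℝ) : ℝ :=
  sInf {t | ∃ P, IsCoupling a b P ∧ t = dot P C}

/-- The constraint set `Γ^N_{a,b}` of coupling decompositions. -/
def Gamma (N : ℕ) {n m : ℕ} (a : Fin n → ℝ) (b : Fin m → ℝ) :
    Set (Fin N → Matrix (Fin n) (Fin m) ℝ) :=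
  {P | (∀ k i j, 0 ≤ P k i j) ∧ (∀ i, ∑ k, ∑ j, P k i j = a i) ∧
       (∀ j, ∑ k, ∑ i, P k i j = b j)}

/-- Discrete equitable optimal transport value. -/
noncomputable def EOT {N n m : ℕ} (a : Fin n → ℝ) (b : Fin m → ℝ)
    (C : Fin N → Matrix (Fin n) (Fin m) ℝ) : ℝ :=
  sInf {t | ∃ P ∈ Gamma N a b, t = ⨆ i, dot (P i) (C i)}

lemma pi_lin_expand {κ : ℕ} (φ : (Fin κ → ℝ) →ₗ[ℝ] ℝ) (u : Fin κ → ℝ) :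
    φ u = ∑ k, u k * φ (Pi.single k 1) := by
  conv_lhs => rw [← Finset.univ_sum_single u]
  rw [map_sum]
  refine Finset.sum_congr rfl fun k _ => ?_
  have h : Pi.single k (u k) = u k • (Pi.single k 1 : Fin κ → ℝ) := by
    funext x
    simp [Pi.single_apply, mul_ite]
  rw [h, map_smul, smul_eq_mul]

lemma scale_neg {x r : ℝ} (h : ∀ c : ℝ, 0 < c → c * x < r) (hr : 0 < r) : x ≤ 0 := by
  by_contra hx
  push_neg at hx
  have h2 := h ((r+1)/x) (by positivity)
  rw [div_mul_cancel₀ _ (ne_of_gt hx)] at h2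
  linarith

set_option maxHeartbeats 3200000 in
/-- Strong duality for discrete EOT. -/
theorem stmt_10 (N n m : ℕ) (hN : 0 < N) (a : Fin n → ℝ) (b : Fin m → ℝ)
    (ha : a ∈ stdSimplex ℝ (Fin n)) (hb : b ∈ stdSimplex ℝ (Fin m))
    (C : Fin N → Matrix (Fin n) (Fin m) ℝ) :
    EOT a b C =
      sSup {t | ∃ l ∈ stdSimplex ℝ (Fin N), ∃ f : Fin n → ℝ, ∃ g : Fin m → ℝ,
        (∀ i k j, f k + g j ≤ l i * C i k j) ∧
        t = ∑ k, f k * a k + ∑ j, g j * b j} := by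
  classical
  obtain ⟨ha0, ha1⟩ := ha
  obtain ⟨hb0, hb1⟩ := hb
  have hNe : Nonempty (Fin N) := ⟨⟨0, hN⟩⟩
  set i0 : Fin N := ⟨0, hN⟩ with hi0
  set Pr : Set ℝ := {t | ∃ P ∈ Gamma N a b, t = ⨆ i, dot (P i) (C i)} with hPr
  set D : Set ℝ := {t | ∃ l ∈ stdSimplex ℝ (Fin N), ∃ f : Fin n → ℝ, ∃ g : Fin m → ℝ,
        (∀ i k j, f k + g j ≤ l i * C i k j) ∧
        t = ∑ k, f k * a k + ∑ j, g j * b j} with hD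
  have hEOT : EOT a b C = sInf Pr := rfl
  set B : ℝ := ∑ i, ∑ k, ∑ j, |C i k j| with hB
  have habsB : ∀ i k j, |C i k j| ≤ B := by
    intro i k j
    have h1 : |C i k j| ≤ ∑ j', |C i k j'| :=
      Finset.single_le_sum (f := fun j' => |C i k j'|) (fun _ _ => abs_nonneg _) (mem_univ j)
    have h2 : ∑ j', |C i k j'| ≤ ∑ k', ∑ j', |C i k' j'| :=
      Finset.single_le_sum (f := fun k' => ∑ j', |C i k' j'|)
        (fun _ _ => Finset.sum_nonneg fun _ _ => abs_nonneg _) (mem_univ k)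
    have h3 : ∑ k', ∑ j', |C i k' j'| ≤ B :=
      Finset.single_le_sum (f := fun i' => ∑ k', ∑ j', |C i' k' j'|)
        (fun _ _ => Finset.sum_nonneg fun _ _ => Finset.sum_nonneg fun _ _ => abs_nonneg _)
        (mem_univ i)
    linarith
  -- the product coupling, giving a primal feasible point
  have hP0 : (fun i k j => if i = i0 then a k * b j else 0) ∈ Gamma N a b := by
    refine ⟨fun i k j => ?_, fun k => ?_, fun j => ?_⟩
    · dsimp only; split
      · exact mul_nonneg (ha0 k) (hb0 j)
      · exact le_refl 0
    · have h : ∀ i' : Fin N, ∑ j, (if i' = i0 then a k * b j else 0) = if i' = i0 then a k else 0 := by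
        intro i'; split
        · rw [← Finset.mul_sum, hb1, mul_one]
        · simp
      simp only [h, Finset.sum_ite_eq', mem_univ, if_true]
    · have h : ∀ i' : Fin N, ∑ k, (if i' = i0 then a k * b j else 0) = if i' = i0 then b j else 0 := by
        intro i'; split
        · rw [← Finset.sum_mul, ha1, one_mul]
        · simp
      simp only [h, Finset.sum_ite_eq', mem_univ, if_true]
  have hPrne : Pr.Nonempty := ⟨_, ⟨_, hP0, rfl⟩⟩
  -- every primal value is at least -B
  have hPrlb : ∀ t ∈ Pr, -B ≤ t := by
    intro t ht
    obtain ⟨P, ⟨hP1, hP2, hP3⟩, rfl⟩ := ht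
    have hup : ∀ k j, P i0 k j ≤ 1 := by
      intro k j
      have h1 : P i0 k j ≤ ∑ j', P i0 k j' :=
        Finset.single_le_sum (f := fun j' => P i0 k j') (fun _ _ => hP1 _ _ _) (mem_univ j)
      have h2 : ∑ j', P i0 k j' ≤ ∑ i, ∑ j', P i k j' :=
        Finset.single_le_sum (f := fun i => ∑ j', P i k j')
          (fun _ _ => Finset.sum_nonneg fun _ _ => hP1 _ _ _) (mem_univ i0)
      have h3 : a k ≤ 1 := by
        rw [← ha1]
        exact Finset.single_le_sum (f := a) (fun _ _ => ha0 _) (mem_univ k)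
      rw [hP2 k] at h2
      linarith
    have hterm : ∀ k j, -|C i0 k j| ≤ P i0 k j * C i0 k j := by
      intro k j
      have e1 : 0 ≤ P i0 k j * (C i0 k j + |C i0 k j|) :=
        mul_nonneg (hP1 _ _ _) (by linarith [neg_abs_le (C i0 k j)])
      have e2 : P i0 k j * |C i0 k j| ≤ |C i0 k j| :=
        mul_le_of_le_one_left (abs_nonneg _) (hup k j)
      rw [mul_add] at e1
      linarith
    have hdot : -B ≤ dot (P i0) (C i0) := by
      have h4 : ∑ k, ∑ j, |C i0 k j| ≤ B :=
        Finset.single_le_sum (f := fun i => ∑ k, ∑ j, |C i k j|)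
          (fun _ _ => Finset.sum_nonneg fun _ _ => Finset.sum_nonneg fun _ _ => abs_nonneg _)
          (mem_univ i0)
      have h5 : ∑ k, ∑ j, -|C i0 k j| ≤ dot (P i0) (C i0) := by
        refine Finset.sum_le_sum fun k _ => Finset.sum_le_sum fun j _ => hterm k j
      have h6 : ∑ k, ∑ j, -|C i0 k j| = -(∑ k, ∑ j, |C i0 k j|) := by
        simp [Finset.sum_neg_distrib]
      rw [h6] at h5
      linarith
    have hle : dot (P i0) (C i0) ≤ ⨆ i, dot (P i) (C i) :=
      le_ciSup (f := fun i => dot (P i) (C i)) (Set.Finite.bddAbove (Set.finite_range _)) i0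
    linarith
  have hbdd : BddBelow Pr := ⟨-B, fun t ht => hPrlb t ht⟩
  -- weak duality
  have hweak : ∀ d ∈ D, ∀ t ∈ Pr, d ≤ t := by
    rintro d ⟨l, ⟨hl0, hl1⟩, f, g, hfg, rfl⟩ t ⟨P, ⟨hP1, hP2, hP3⟩, rfl⟩
    set S : ℝ := ⨆ i, dot (P i) (C i) with hS
    have hdotS : ∀ i, dot (P i) (C i) ≤ S :=
      fun i => le_ciSup (f := fun i => dot (P i) (C i))
        (Set.Finite.bddAbove (Set.finite_range _)) i
    have e1 : ∑ k, f k * a k = ∑ i, ∑ k, ∑ j, f k * P i k j := by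
      rw [Finset.sum_comm]
      refine Finset.sum_congr rfl fun k _ => ?_
      rw [← hP2 k, Finset.mul_sum]
      refine Finset.sum_congr rfl fun i _ => ?_
      rw [Finset.mul_sum]
    have e2 : ∑ j, g j * b j = ∑ i, ∑ k, ∑ j, g j * P i k j := by
      have : ∀ i, ∑ k, ∑ j, g j * P i k j = ∑ j, ∑ k, g j * P i k j :=
        fun i => Finset.sum_comm
      rw [Finset.sum_congr rfl fun i _ => this i, Finset.sum_comm]
      refine Finset.sum_congr rfl fun j _ => ?_
      rw [← hP3 j, Finset.mul_sum]
      refine Finset.sum_congr rfl fun i _ => ?_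
      rw [Finset.mul_sum]
    have e3 : ∑ k, f k * a k + ∑ j, g j * b j
        = ∑ i, ∑ k, ∑ j, (f k + g j) * P i k j := by
      rw [e1, e2, ← Finset.sum_add_distrib]
      refine Finset.sum_congr rfl fun i _ => ?_
      rw [← Finset.sum_add_distrib]
      refine Finset.sum_congr rfl fun k _ => ?_
      rw [← Finset.sum_add_distrib]
      refine Finset.sum_congr rfl fun j _ => ?_
      ring
    have e4 : ∑ i, ∑ k, ∑ j, (f k + g j) * P i k j ≤ ∑ i, l i * dot (P i) (C i) := by
      refine Finset.sum_le_sum fun i _ => ?_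
      calc ∑ k, ∑ j, (f k + g j) * P i k j
          ≤ ∑ k, ∑ j, l i * (P i k j * C i k j) := by
            refine Finset.sum_le_sum fun k _ => Finset.sum_le_sum fun j _ => ?_
            calc (f k + g j) * P i k j
                ≤ l i * C i k j * P i k j :=
                  mul_le_mul_of_nonneg_right (hfg i k j) (hP1 i k j)
              _ = l i * (P i k j * C i k j) := by ring
        _ = l i * dot (P i) (C i) := by
            rw [dot, Finset.mul_sum]
            exact Finset.sum_congr rfl fun k _ => (Finset.mul_sum _ _ _).symm
    have e5 : ∑ i, l i * dot (P i) (C i) ≤ S := by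
      calc ∑ i, l i * dot (P i) (C i) ≤ ∑ i, l i * S :=
            Finset.sum_le_sum fun i _ => mul_le_mul_of_nonneg_left (hdotS i) (hl0 i)
        _ = S := by rw [← Finset.sum_mul, hl1, one_mul]
    linarith
  have hDne : D.Nonempty := by
    refine ⟨_, Pi.single i0 1, ⟨fun i => ?_, ?_⟩, fun _ => -(1+B), fun _ => 0, fun i k j => ?_, rfl⟩
    · by_cases h : i = i0 <;> simp [Pi.single_apply, h]
    · simp [Pi.single_apply, Finset.sum_ite_eq', mem_univ]
    · have hC : -B ≤ C i0 k j := by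
        have := habsB i0 k j
        have := neg_abs_le (C i0 k j)
        linarith
      have hB0 : 0 ≤ B := le_trans (abs_nonneg _) (habsB i0 k j)
      by_cases h : i = i0 <;> simp [Pi.single_apply, h] <;> linarith
  obtain ⟨t0, ht0⟩ := id hPrne
  have hDbdd : BddAbove D := ⟨t0, fun d hd => hweak d hd t0 ht0⟩
  -- strong duality direction
  have hstrong : ∀ ε : ℝ, 0 < ε → ∃ d ∈ D, sInf Pr - ε < d := by
    intro ε hε
    set v : ℝ := sInf Pr with hv
    set A : Set ((Fin n → ℝ) × (Fin m → ℝ) × (Fin N → ℝ) × ℝ) :=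
      {z | ∃ P : Fin N → Matrix (Fin n) (Fin m) ℝ, (∀ i k j, 0 ≤ P i k j) ∧
        (∀ k, z.1 k = ∑ i, ∑ j, P i k j) ∧ (∀ j, z.2.1 j = ∑ i, ∑ k, P i k j) ∧
        (∀ i, dot (P i) (C i) ≤ z.2.2.1 i + z.2.2.2)} with hA
    have hconvA : Convex ℝ A := by
      rintro z ⟨P, h1, h2, h3, h4⟩ z' ⟨P', h1', h2', h3', h4'⟩ α β hα hβ hαβ
      refine ⟨fun i k j => α * P i k j + β * P' i k j,
        fun i k j => add_nonneg (mul_nonneg hα (h1 i k j)) (mul_nonneg hβ (h1' i k j)),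
        fun k => ?_, fun j => ?_, fun i => ?_⟩
      · have : (α • z + β • z').1 k = α * z.1 k + β * z'.1 k := by
          simp [Prod.smul_fst, Prod.fst_add, smul_eq_mul]
        rw [this, h2 k, h2' k, Finset.mul_sum, Finset.mul_sum, ← Finset.sum_add_distrib]
        refine Finset.sum_congr rfl fun i _ => ?_
        rw [Finset.mul_sum, Finset.mul_sum, ← Finset.sum_add_distrib]
      · have : (α • z + β • z').2.1 j = α * z.2.1 j + β * z'.2.1 j := by
          simp [smul_eq_mul]
        rw [this, h3 j, h3' j, Finset.mul_sum, Finset.mul_sum, ← Finset.sum_add_distrib]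
        refine Finset.sum_congr rfl fun i _ => ?_
        rw [Finset.mul_sum, Finset.mul_sum, ← Finset.sum_add_distrib]
      · have hz1 : (α • z + β • z').2.2.1 i = α * z.2.2.1 i + β * z'.2.2.1 i := by
          simp [smul_eq_mul]
        have hz2 : (α • z + β • z').2.2.2 = α * z.2.2.2 + β * z'.2.2.2 := by
          simp [smul_eq_mul]
        have hdc : dot (fun k j => α * P i k j + β * P' i k j) (C i)
            = α * dot (P i) (C i) + β * dot (P' i) (C i) := by
          simp only [dot]
          rw [Finset.mul_sum, Finset.mul_sum, ← Finset.sum_add_distrib]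
          refine Finset.sum_congr rfl fun k _ => ?_
          rw [Finset.mul_sum, Finset.mul_sum, ← Finset.sum_add_distrib]
          refine Finset.sum_congr rfl fun j _ => ?_
          ring
        rw [hz1, hz2, hdc]
        have i1 := mul_le_mul_of_nonneg_left (h4 i) hα
        have i2 := mul_le_mul_of_nonneg_left (h4' i) hβ
        nlinarith [i1, i2]
    have hclosedA : IsClosed A := by
      refine IsSeqClosed.isClosed ?_
      intro zs z hzs hz
      choose P hP1 hP2 hP3 hP4 using hzs
      have htend1 : ∀ k, Filter.Tendsto (fun s => (zs s).1 k) Filter.atTop (nhds (z.1 k)) :=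
        fun k => (((continuous_apply k).comp continuous_fst).tendsto z).comp hz
      have htendsum : Filter.Tendsto (fun s => ∑ k, (zs s).1 k) Filter.atTop
          (nhds (∑ k, z.1 k)) := tendsto_finset_sum _ fun k _ => htend1 k
      obtain ⟨R, hR⟩ := htendsum.bddAbove_range
      have hRb : ∀ s, ∑ k, (zs s).1 k ≤ R := fun s => hR (Set.mem_range_self s)
      have hent : ∀ s i k j, P s i k j ≤ R := by
        intro s i k j
        have e1 : P s i k j ≤ ∑ j', P s i k j' :=
          Finset.single_le_sum (f := fun j' => P s i k j') (fun _ _ => hP1 s i k _)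
            (mem_univ j)
        have e2 : ∑ j', P s i k j' ≤ ∑ i', ∑ j', P s i' k j' :=
          Finset.single_le_sum (f := fun i' => ∑ j', P s i' k j')
            (fun _ _ => Finset.sum_nonneg fun _ _ => hP1 s _ k _) (mem_univ i)
        have e3 : (zs s).1 k ≤ ∑ k', (zs s).1 k' := by
          have hnn : ∀ k', 0 ≤ (zs s).1 k' := by
            intro k'
            rw [hP2 s k']
            exact Finset.sum_nonneg fun _ _ => Finset.sum_nonneg fun _ _ => hP1 s _ _ _
          exact Finset.single_le_sum (f := fun k' => (zs s).1 k') (fun k' _ => hnn k')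
            (mem_univ k)
        rw [← hP2 s k] at e2
        have := hRb s
        linarith
      haveI : FirstCountableTopology (Fin N → Matrix (Fin n) (Fin m) ℝ) :=
        inferInstanceAs (FirstCountableTopology (Fin N → Fin n → Fin m → ℝ))
      set K : Set (Fin N → Fin n → Fin m → ℝ) :=
        Set.univ.pi fun _ : Fin N => Set.univ.pi fun _ : Fin n =>
          Set.univ.pi fun _ : Fin m => Set.Icc (0:ℝ) R with hK
      have hKc : IsCompact K :=
        isCompact_univ_pi fun _ => isCompact_univ_pi fun _ =>
          isCompact_univ_pi fun _ => isCompact_Icc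
      have hPK : ∀ s, P s ∈ K := by
        intro s
        exact fun i _ k _ j _ => ⟨hP1 s i k j, hent s i k j⟩
      obtain ⟨Q, hQK, φ, hφ, hQt⟩ := hKc.tendsto_subseq (x := fun s i k j => P s i k j) hPK
      have hQt' : ∀ i k j, Filter.Tendsto (fun s => P (φ s) i k j) Filter.atTop
          (nhds (Q i k j)) := fun i k j =>
        tendsto_pi_nhds.mp (tendsto_pi_nhds.mp (tendsto_pi_nhds.mp hQt i) k) j
      have hQ0 : ∀ i k j, 0 ≤ Q i k j := by
        intro i k j
        exact (hQK i (Set.mem_univ i) k (Set.mem_univ k) j (Set.mem_univ j)).1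
      refine ⟨Q, hQ0, fun k => ?_, fun j => ?_, fun i => ?_⟩
      · have l1 : Filter.Tendsto (fun s => (zs (φ s)).1 k) Filter.atTop (nhds (z.1 k)) :=
          (htend1 k).comp hφ.tendsto_atTop
        have l2 : Filter.Tendsto (fun s => (zs (φ s)).1 k) Filter.atTop
            (nhds (∑ i, ∑ j, Q i k j)) := by
          have e : (fun s => (zs (φ s)).1 k) = fun s => ∑ i, ∑ j, P (φ s) i k j :=
            funext fun s => hP2 (φ s) k
          rw [e]
          exact tendsto_finset_sum _ fun i _ => tendsto_finset_sum _ fun j _ => hQt' i k j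
        exact tendsto_nhds_unique l1 l2
      · have htend2 : Filter.Tendsto (fun s => (zs s).2.1 j) Filter.atTop (nhds (z.2.1 j)) :=
          (((continuous_apply j).comp (continuous_fst.comp continuous_snd)).tendsto z).comp hz
        have l1 : Filter.Tendsto (fun s => (zs (φ s)).2.1 j) Filter.atTop (nhds (z.2.1 j)) :=
          htend2.comp hφ.tendsto_atTop
        have l2 : Filter.Tendsto (fun s => (zs (φ s)).2.1 j) Filter.atTop
            (nhds (∑ i, ∑ k, Q i k j)) := by
          have e : (fun s => (zs (φ s)).2.1 j) = fun s => ∑ i, ∑ k, P (φ s) i k j :=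
            funext fun s => hP3 (φ s) j
          rw [e]
          exact tendsto_finset_sum _ fun i _ => tendsto_finset_sum _ fun k _ => hQt' i k j
        exact tendsto_nhds_unique l1 l2
      · have r1 : Filter.Tendsto (fun s => dot (P (φ s) i) (C i)) Filter.atTop
            (nhds (dot (Q i) (C i))) := by
          simp only [dot]
          exact tendsto_finset_sum _ fun k _ => tendsto_finset_sum _ fun j _ =>
            (hQt' i k j).mul_const _
        have htend3 : Filter.Tendsto (fun s => (zs s).2.2.1 i) Filter.atTop
            (nhds (z.2.2.1 i)) :=
          (((continuous_apply i).comp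
            (continuous_fst.comp (continuous_snd.comp continuous_snd))).tendsto z).comp hz
        have htend4 : Filter.Tendsto (fun s => (zs s).2.2.2) Filter.atTop
            (nhds (z.2.2.2)) :=
          ((continuous_snd.comp (continuous_snd.comp continuous_snd)).tendsto z).comp hz
        have r2 : Filter.Tendsto (fun s => (zs (φ s)).2.2.1 i + (zs (φ s)).2.2.2)
            Filter.atTop (nhds (z.2.2.1 i + z.2.2.2)) :=
          ((htend3.comp hφ.tendsto_atTop).add (htend4.comp hφ.tendsto_atTop))
        exact le_of_tendsto_of_tendsto' r1 r2 fun s => hP4 (φ s) i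
    have hx0 : ((a, b, 0, v - ε) : (Fin n → ℝ) × (Fin m → ℝ) × (Fin N → ℝ) × ℝ) ∉ A := by
      rintro ⟨P, h1, h2, h3, h4⟩
      have hmem : (⨆ i, dot (P i) (C i)) ∈ Pr :=
        ⟨P, ⟨h1, fun k => (h2 k).symm, fun j => (h3 j).symm⟩, rfl⟩
      have hlow : v ≤ ⨆ i, dot (P i) (C i) := csInf_le hbdd hmem
      have hupk : (⨆ i, dot (P i) (C i)) ≤ v - ε := by
        refine ciSup_le fun i => ?_
        have := h4 i
        simpa using this
      linarith
    obtain ⟨F, r, hFA, hFx⟩ := geometric_hahn_banach_closed_point hconvA hclosedA hx0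
    set fc : Fin n → ℝ := fun k => F ((Pi.single k 1 : Fin n → ℝ), 0, 0, 0) with hfc
    set gc : Fin m → ℝ := fun j => F (0, (Pi.single j 1 : Fin m → ℝ), 0, 0) with hgc
    set lc : Fin N → ℝ := fun i => F (0, 0, (Pi.single i 1 : Fin N → ℝ), 0) with hlcdef
    set tc : ℝ := F (0, 0, 0, 1) with htcdef
    have e1 : ∀ u : Fin n → ℝ, F (u, 0, 0, 0) = ∑ k, u k * fc k := by
      intro u
      exact pi_lin_expand
        ⟨⟨fun u => F (u, 0, 0, 0),
          fun x y => by
            show F (x + y, 0, 0, 0) = F (x, 0, 0, 0) + F (y, 0, 0, 0)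
            rw [← map_add]; congr 1; simp [Prod.ext_iff]⟩,
          fun c x => by
            show F (c • x, 0, 0, 0) = c • F (x, 0, 0, 0)
            rw [← map_smul]; congr 1; simp [Prod.ext_iff]⟩ u
    have e2 : ∀ w : Fin m → ℝ, F (0, w, 0, 0) = ∑ j, w j * gc j := by
      intro w
      exact pi_lin_expand
        ⟨⟨fun w => F (0, w, 0, 0),
          fun x y => by
            show F (0, x + y, 0, 0) = F (0, x, 0, 0) + F (0, y, 0, 0)
            rw [← map_add]; congr 1; simp [Prod.ext_iff]⟩,
          fun c x => by
            show F (0, c • x, 0, 0) = c • F (0, x, 0, 0)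
            rw [← map_smul]; congr 1; simp [Prod.ext_iff]⟩ w
    have e3 : ∀ sv : Fin N → ℝ, F (0, 0, sv, 0) = ∑ i, sv i * lc i := by
      intro sv
      exact pi_lin_expand
        ⟨⟨fun sv => F (0, 0, sv, 0),
          fun x y => by
            show F (0, 0, x + y, 0) = F (0, 0, x, 0) + F (0, 0, y, 0)
            rw [← map_add]; congr 1; simp [Prod.ext_iff]⟩,
          fun c x => by
            show F (0, 0, c • x, 0) = c • F (0, 0, x, 0)
            rw [← map_smul]; congr 1; simp [Prod.ext_iff]⟩ sv
    have e4 : ∀ t : ℝ, F (0, 0, 0, t) = t * tc := by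
      intro t
      have h : ((0, 0, 0, t) : (Fin n → ℝ) × (Fin m → ℝ) × (Fin N → ℝ) × ℝ)
          = t • ((0, 0, 0, 1) : (Fin n → ℝ) × (Fin m → ℝ) × (Fin N → ℝ) × ℝ) := by
        simp [Prod.ext_iff]
      rw [h, map_smul, smul_eq_mul]
    have expand : ∀ (u : Fin n → ℝ) (w : Fin m → ℝ) (sv : Fin N → ℝ) (t : ℝ),
        F (u, w, sv, t)
          = ∑ k, u k * fc k + ∑ j, w j * gc j + ∑ i, sv i * lc i + t * tc := by
      intro u w sv t
      have hsplit : ((u, w, sv, t) : (Fin n → ℝ) × (Fin m → ℝ) × (Fin N → ℝ) × ℝ)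
          = (u, 0, 0, 0) + (0, w, 0, 0) + (0, 0, sv, 0) + (0, 0, 0, t) := by
        simp [Prod.ext_iff]
      rw [hsplit, map_add, map_add, map_add, e1, e2, e3, e4]
    have hr0 : 0 < r := by
      have h0A : (0 : (Fin n → ℝ) × (Fin m → ℝ) × (Fin N → ℝ) × ℝ) ∈ A := by
        rw [hA]
        exact ⟨0, fun i k j => le_refl 0, fun k => by simp, fun j => by simp,
          fun i => by simp [dot]⟩
      have := hFA 0 h0A
      simpa using this
    have hscale : ∀ z : (Fin n → ℝ) × (Fin m → ℝ) × (Fin N → ℝ) × ℝ,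
        (∀ c : ℝ, 0 < c → c • z ∈ A) → F z ≤ 0 := by
      intro z hzmem
      refine scale_neg (fun c hc => ?_) hr0
      have := hFA _ (hzmem c hc)
      rwa [map_smul, smul_eq_mul] at this
    have memP0 : ∀ (sv : Fin N → ℝ) (t : ℝ), (∀ i, 0 ≤ sv i + t) →
        ((0, 0, sv, t) : (Fin n → ℝ) × (Fin m → ℝ) × (Fin N → ℝ) × ℝ) ∈ A := by
      intro sv t hst
      rw [hA]
      exact ⟨0, fun i k j => le_refl 0, fun k => by simp, fun j => by simp,
        fun i => by simpa [dot] using hst i⟩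
    have hlc0 : ∀ i, lc i ≤ 0 := by
      intro i
      refine hscale _ (fun c hc => ?_)
      have h : c • ((0, 0, (Pi.single i 1 : Fin N → ℝ), 0) :
            (Fin n → ℝ) × (Fin m → ℝ) × (Fin N → ℝ) × ℝ)
          = ((0, 0, c • (Pi.single i 1 : Fin N → ℝ), 0) :
            (Fin n → ℝ) × (Fin m → ℝ) × (Fin N → ℝ) × ℝ) := by
        simp [Prod.ext_iff]
      rw [h]
      refine memP0 _ _ (fun i' => ?_)
      by_cases hii : i' = i <;> simp [hii, Pi.single_apply, hc.le]
    have htc0 : tc ≤ 0 := by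
      refine hscale _ (fun c hc => ?_)
      have h : c • ((0, 0, 0, 1) : (Fin n → ℝ) × (Fin m → ℝ) × (Fin N → ℝ) × ℝ)
          = ((0, 0, 0, c) : (Fin n → ℝ) × (Fin m → ℝ) × (Fin N → ℝ) × ℝ) := by
        simp [Prod.ext_iff]
      rw [h]
      exact memP0 0 c (fun i => by simpa using hc.le)
    have htceq : tc = ∑ i, lc i := by
      have h1 : F (0, 0, (fun _ => (1:ℝ)), -1) ≤ 0 := by
        refine hscale _ (fun c hc => ?_)
        have h : c • ((0, 0, (fun _ => (1:ℝ)), -1) :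
              (Fin n → ℝ) × (Fin m → ℝ) × (Fin N → ℝ) × ℝ)
            = ((0, 0, (fun _ => c), -c) :
              (Fin n → ℝ) × (Fin m → ℝ) × (Fin N → ℝ) × ℝ) := by
          simp [Prod.ext_iff]
          funext x
          simp
        rw [h]
        exact memP0 _ _ (fun i => by show (0:ℝ) ≤ c + -c; linarith)
      have h2 : F (0, 0, (fun _ => (-1:ℝ)), 1) ≤ 0 := by
        refine hscale _ (fun c hc => ?_)
        have h : c • ((0, 0, (fun _ => (-1:ℝ)), 1) :
              (Fin n → ℝ) × (Fin m → ℝ) × (Fin N → ℝ) × ℝ)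
            = ((0, 0, (fun _ => -c), c) :
              (Fin n → ℝ) × (Fin m → ℝ) × (Fin N → ℝ) × ℝ) := by
          simp [Prod.ext_iff]
          funext x
          simp
        rw [h]
        exact memP0 _ _ (fun i => by show (0:ℝ) ≤ -c + c; linarith)
      rw [expand] at h1 h2
      simp only [Pi.zero_apply, zero_mul, Finset.sum_const_zero, zero_add, one_mul,
        neg_one_mul] at h1 h2
      have hsneg : ∑ i : Fin N, -lc i = -∑ i, lc i := by simp
      rw [hsneg] at h2
      linarith
    have hkey : ∀ i k j, fc k + gc j + C i k j * lc i ≤ 0 := by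
      intro i k j
      have hF0 : F ((Pi.single k 1 : Fin n → ℝ), (Pi.single j 1 : Fin m → ℝ),
          (Pi.single i (C i k j) : Fin N → ℝ), 0) ≤ 0 := by
        refine hscale _ (fun c hc => ?_)
        rw [hA]
        refine ⟨fun i' k' j' => c * ((if i' = i then (1:ℝ) else 0) *
          ((if k' = k then (1:ℝ) else 0) * (if j' = j then (1:ℝ) else 0))),
          fun i' k' j' => ?_, fun k' => ?_, fun j' => ?_, fun i' => ?_⟩
        · have := hc.le
          positivity
        · have lhs : (c • ((Pi.single k 1 : Fin n → ℝ), (Pi.single j 1 : Fin m → ℝ),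
              (Pi.single i (C i k j) : Fin N → ℝ), (0:ℝ))).1 k'
              = c * (if k' = k then (1:ℝ) else 0) := by
            simp [Pi.single_apply]
          rw [lhs]
          rw [Finset.sum_comm]
          simp [Finset.sum_ite_eq', mul_ite, ite_mul, Finset.mul_sum]
        · have lhs : (c • ((Pi.single k 1 : Fin n → ℝ), (Pi.single j 1 : Fin m → ℝ),
              (Pi.single i (C i k j) : Fin N → ℝ), (0:ℝ))).2.1 j'
              = c * (if j' = j then (1:ℝ) else 0) := by
            simp [Pi.single_apply]
          rw [lhs]
          rw [Finset.sum_comm]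
          simp [Finset.sum_ite_eq', mul_ite, ite_mul, Finset.mul_sum]
        · have rhs : (c • ((Pi.single k 1 : Fin n → ℝ), (Pi.single j 1 : Fin m → ℝ),
              (Pi.single i (C i k j) : Fin N → ℝ), (0:ℝ))).2.2.1 i'
              + (c • ((Pi.single k 1 : Fin n → ℝ), (Pi.single j 1 : Fin m → ℝ),
              (Pi.single i (C i k j) : Fin N → ℝ), (0:ℝ))).2.2.2
              = c * (if i' = i then C i k j else 0) := by
            simp [Pi.single_apply]
          rw [rhs]
          have hdot : dot (fun k' j' => c * ((if i' = i then (1:ℝ) else 0) *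
              ((if k' = k then (1:ℝ) else 0) * (if j' = j then (1:ℝ) else 0)))) (C i')
              = c * (if i' = i then (1:ℝ) else 0) * C i' k j := by
            simp only [dot]
            simp [Finset.sum_ite_eq', mul_ite, ite_mul, Finset.mul_sum, mul_assoc]
          rw [hdot]
          by_cases h : i' = i
          · subst h; simp
          · simp [h]
      have hFz : F ((Pi.single k 1 : Fin n → ℝ), (Pi.single j 1 : Fin m → ℝ),
          (Pi.single i (C i k j) : Fin N → ℝ), 0)
          = fc k + gc j + C i k j * lc i := by
        rw [expand]
        have t1 : ∑ k', (Pi.single k 1 : Fin n → ℝ) k' * fc k' = fc k := by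
          simp [Pi.single_apply, ite_mul, Finset.sum_ite_eq']
        have t2 : ∑ j', (Pi.single j 1 : Fin m → ℝ) j' * gc j' = gc j := by
          simp [Pi.single_apply, ite_mul, Finset.sum_ite_eq']
        have t3 : ∑ i', (Pi.single i (C i k j) : Fin N → ℝ) i' * lc i' = C i k j * lc i := by
          simp [Pi.single_apply, ite_mul, Finset.sum_ite_eq']
        rw [t1, t2, t3]
        ring
      rw [← hFz]
      exact hF0
    have hpoint : r < ∑ k, a k * fc k + ∑ j, b j * gc j + (v - ε) * tc := by
      have h := hFx
      rw [expand a b 0 (v - ε)] at h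
      simpa using h
    rcases lt_or_eq_of_le htc0 with htcneg | htczero
    · -- tc < 0 : normalize
      set μ : ℝ := -tc with hμ
      have hμ0 : 0 < μ := by rw [hμ]; linarith
      refine ⟨∑ k, (fc k / μ) * a k + ∑ j, (gc j / μ) * b j, ?_, ?_⟩
      · rw [hD]
        refine ⟨fun i => lc i / tc, ⟨fun i => ?_, ?_⟩, fun k => fc k / μ,
          fun j => gc j / μ, fun i k j => ?_, rfl⟩
        · show 0 ≤ lc i / tc
          rw [show lc i / tc = -lc i / -tc by rw [neg_div_neg_eq]]
          exact div_nonneg (by linarith [hlc0 i]) (by linarith)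
        · show ∑ i, lc i / tc = 1
          rw [← Finset.sum_div, ← htceq, div_self (ne_of_lt htcneg)]
        · show fc k / μ + gc j / μ ≤ lc i / tc * C i k j
          rw [← add_div]
          have hineq : fc k + gc j ≤ -(C i k j * lc i) := by linarith [hkey i k j]
          have htcne : tc ≠ 0 := ne_of_lt htcneg
          have heq : lc i / tc * C i k j = -(C i k j * lc i) / μ := by
            rw [hμ]
            field_simp
          rw [heq]
          exact (div_le_div_iff_of_pos_right hμ0).mpr hineq
      · have hsum : ∑ k, (fc k / μ) * a k + ∑ j, (gc j / μ) * b j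
            = (∑ k, a k * fc k + ∑ j, b j * gc j) / μ := by
          rw [add_div, Finset.sum_div, Finset.sum_div]
          congr 1
          · exact Finset.sum_congr rfl fun k _ => by ring
          · exact Finset.sum_congr rfl fun j _ => by ring
        rw [hsum, lt_div_iff₀ hμ0]
        have hμtc : (v - ε) * μ = -((v - ε) * tc) := by rw [hμ]; ring
        linarith [hpoint, hr0, hμtc]
    · -- tc = 0 : contradiction
      exfalso
      have hsum0 : ∑ i, lc i = 0 := by rw [← htceq, ← htczero]
      have hlczero : ∀ i, lc i = 0 := by
        have h := (Finset.sum_eq_zero_iff_of_nonpos (fun i _ => hlc0 i)).mp hsum0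
        exact fun i => h i (mem_univ i)
      have hkey0 : ∀ k j, fc k + gc j ≤ 0 := by
        intro k j
        have h := hkey i0 k j
        rw [hlczero i0] at h
        linarith
      have hS : ∑ k, a k * fc k + ∑ j, b j * gc j ≤ 0 := by
        have q1 : ∑ k, a k * fc k = ∑ k, ∑ j, a k * b j * fc k := by
          refine Finset.sum_congr rfl fun k _ => ?_
          calc a k * fc k = a k * fc k * ∑ j, b j := by rw [hb1, mul_one]
            _ = ∑ j, a k * b j * fc k := by
                rw [Finset.mul_sum]
                exact Finset.sum_congr rfl fun j _ => by ring
        have q2 : ∑ j, b j * gc j = ∑ k, ∑ j, a k * b j * gc j := by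
          have hq : ∀ j, b j * gc j = ∑ k, a k * b j * gc j := by
            intro j
            calc b j * gc j = (∑ k, a k) * (b j * gc j) := by rw [ha1, one_mul]
              _ = ∑ k, a k * b j * gc j := by
                  rw [Finset.sum_mul]
                  exact Finset.sum_congr rfl fun k _ => by ring
          rw [Finset.sum_congr rfl fun j _ => hq j, Finset.sum_comm]
        rw [q1, q2, ← Finset.sum_add_distrib]
        refine Finset.sum_nonpos fun k _ => ?_
        rw [← Finset.sum_add_distrib]
        refine Finset.sum_nonpos fun j _ => ?_
        have hab : 0 ≤ a k * b j := mul_nonneg (ha0 k) (hb0 j)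
        nlinarith [hkey0 k j]
      rw [htczero, mul_zero] at hpoint
      linarith [hpoint, hr0, hS]
  rw [hEOT]
  refine le_antisymm ?_ (csSup_le hDne fun d hd => le_csInf hPrne fun t ht => hweak d hd t ht)
  refine le_of_forall_pos_le_add fun ε hε => ?_
  obtain ⟨d, hd, hlt⟩ := hstrong ε hε
  have := le_csSup hDbdd hd
  linarith
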